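/- arXiv:1806.08865 — 2 statements merged into one kernel-verified Lean document; each statement's English description precedes it below -/
import Mathlib

section
/- Width after a centroid cut: Let K ⊂ ℝ^d be a compact convex body with nonempty interior and centroid μ, and let H = {x ∈ ℝ^d : ⟨v, x−μ⟩ ≤ 0} be any half-space whose boundary hyperplane passes through μ. Then the minimum directional width satisfies δ(H ∩ K) ≥ δ(K)/(2d). -/
open MeasureTheory Set
open scoped RealInnerProductSpace

/-- The directional width of `K` in direction `v`: `w(K, v) = sup_{x,y ∈ K} ⟪v, x - y⟫`. -/
noncomputable def dirWidth {d : ℕ} (K : Set (EuclideanSpace ℝ (Fin d)))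
    (v : EuclideanSpace ℝ (Fin d)) : ℝ :=
  sSup {r : ℝ | ∃ x ∈ K, ∃ y ∈ K, r = ⟪v, x - y⟫}

/-- The minimum directional width `δ(K)` over all unit directions. -/
noncomputable def minWidth {d : ℕ} (K : Set (EuclideanSpace ℝ (Fin d))) : ℝ :=
  sInf {r : ℝ | ∃ v : EuclideanSpace ℝ (Fin d), ‖v‖ = 1 ∧ r = dirWidth K v}

lemma centroid_avg_le {d : ℕ} (hd : 0 < d) (K : Set (EuclideanSpace ℝ (Fin d)))
    (hKcomp : IsCompact K) (hKconv : Convex ℝ K) (hKint : (interior K).Nonempty)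
    (f : EuclideanSpace ℝ (Fin d) →L[ℝ] ℝ) (a b : EuclideanSpace ℝ (Fin d))
    (ha : a ∈ K) (hb : b ∈ K) (hmin : ∀ y ∈ K, f a ≤ f y) (hmax : ∀ y ∈ K, f y ≤ f b) :
    (d + 1 : ℝ) * f ((volume K).toReal⁻¹ • ∫ x in K, x) ≤ d * f b + f a := by
  have hKmeas : MeasurableSet K := hKcomp.isClosed.measurableSet
  have hfin : volume K ≠ ⊤ := hKcomp.measure_lt_top.ne
  have hpos : 0 < volume K :=
    lt_of_lt_of_le (isOpen_interior.measure_pos volume hKint) (measure_mono interior_subset)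
  set V : ℝ := (volume K).toReal with hVdef
  have hV : 0 < V := ENNReal.toReal_pos hpos.ne' hfin
  have hIntId : IntegrableOn (fun x : EuclideanSpace ℝ (Fin d) => x) K volume :=
    (continuous_id.continuousOn).integrableOn_compact hKcomp
  have hIntf : IntegrableOn (fun x => f x) K volume :=
    (f.continuous.continuousOn).integrableOn_compact hKcomp
  set m : ℝ := f a with hmdef
  set M : ℝ := f b - m with hMdef
  have hM0 : 0 ≤ M := sub_nonneg.2 (hmin b hb)
  set g : EuclideanSpace ℝ (Fin d) → ℝ := fun x => f x - m with hgdef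
  have hgcont : Continuous g := f.continuous.sub continuous_const
  have hIntg : IntegrableOn g K volume := hIntf.sub (integrableOn_const hKcomp.measure_lt_top.ne)
  have hg_nonneg : ∀ x ∈ K, 0 ≤ g x := fun x hx => sub_nonneg.2 (hmin x hx)
  have hg_le : ∀ x ∈ K, g x ≤ M := fun x hx => sub_le_sub_right (hmax x hx) m
  -- main estimate
  have main : ∫ x in K, g x ≤ V * (M * d / (d + 1)) := by
    rcases eq_or_lt_of_le hM0 with hMeq | hM
    · have h1 : ∫ x in K, g x ≤ 0 :=
        setIntegral_nonpos hKmeas (fun x hx => (hg_le x hx).trans hMeq.ge)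
      have h2 : (0:ℝ) ≤ V * (M * d / (d + 1)) := by positivity
      linarith
    · -- layer cake
      have g_nn_ae : 0 ≤ᵐ[volume.restrict K] g :=
        (ae_restrict_iff' hKmeas).2 (Filter.Eventually.of_forall hg_nonneg)
      have layer : ∫⁻ x, ENNReal.ofReal (g x) ∂(volume.restrict K)
          = ∫⁻ t in Ioi (0:ℝ), (volume.restrict K) {x | t < g x} :=
        lintegral_eq_lintegral_meas_lt _ g_nn_ae hgcont.aemeasurable
      -- tail bound
      set BE : ℝ → ENNReal :=
        (Ioc (0:ℝ) M).indicator (fun t => ENNReal.ofReal (V * (1 - (t/M)^d))) with hBEdef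
      have tail_bound : ∀ t ∈ Ioi (0:ℝ), (volume.restrict K) {x | t < g x} ≤ BE t := by
        intro t ht
        have hmeas_lt : MeasurableSet {x : EuclideanSpace ℝ (Fin d) | t < g x} :=
          (isOpen_lt continuous_const hgcont).measurableSet
        rw [Measure.restrict_apply hmeas_lt]
        rcases le_or_gt t M with htM | htM
        · -- 0 < t ≤ M
          have hBEt : BE t = ENNReal.ofReal (V * (1 - (t/M)^d)) := by
            rw [hBEdef, indicator_of_mem (mem_Ioc.mpr ⟨ht, htM⟩)]
          rw [hBEt]
          set r : ℝ := t / M with hrdef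
          have hr0 : 0 < r := div_pos ht hM
          have hr1 : r ≤ 1 := (div_le_one hM).2 htM
          -- homothety image inside K with g ≤ t
          have him : AffineMap.homothety a r '' K ⊆ {x | g x ≤ t} ∩ K := by
            rintro - ⟨y, hy, rfl⟩
            have heq : AffineMap.homothety a r y = r • y + (1 - r) • a := by
              simp [AffineMap.homothety_apply, vsub_eq_sub, vadd_eq_add, smul_sub, sub_smul,
                one_smul]
              module
            constructor
            · show g (AffineMap.homothety a r y) ≤ t
              rw [heq]
              have : g (r • y + (1 - r) • a) = r * (f y - m) := by
                simp [hgdef, map_add, _root_.map_smul, hmdef, smul_eq_mul]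
                ring
              rw [this]
              calc r * (f y - m) ≤ r * M := by
                    apply mul_le_mul_of_nonneg_left _ hr0.le
                    exact hg_le y hy
                _ = t := by rw [hrdef, div_mul_cancel₀ t hM.ne']
            · rw [heq]
              exact hKconv hy ha hr0.le (by linarith) (by ring)
          have hmeasim : volume (AffineMap.homothety a r '' K)
              = ENNReal.ofReal (r ^ d) * volume K := by
            rw [Measure.addHaar_image_homothety]
            congr 2
            rw [abs_of_nonneg (by positivity)]
            congr 1
            exact finrank_euclideanSpace_fin
          -- partition K into {g ≤ t} ∩ K and {t < g} ∩ K
          have hsplit : volume ({x | t < g x} ∩ K) + volume ({x | g x ≤ t} ∩ K) = volume K := by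
            rw [← measure_union ?_ ((isClosed_le hgcont continuous_const).measurableSet.inter hKmeas)]
            · congr 1
              ext x
              constructor
              · rintro (⟨-, hx⟩ | ⟨-, hx⟩) <;> exact hx
              · intro hx
                rcases le_or_gt (g x) t with h | h
                · exact Or.inr ⟨h, hx⟩
                · exact Or.inl ⟨h, hx⟩
            · rw [disjoint_left]
              rintro x ⟨hx1, -⟩ hx2
              exact absurd (show g x ≤ t from hx2.1) (not_le.2 (show t < g x from hx1))
          have hBle : ENNReal.ofReal (r ^ d) * volume K ≤ volume ({x | g x ≤ t} ∩ K) := by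
            rw [← hmeasim]
            exact measure_mono him
          -- conclude in toReal
          have hfin1 : volume ({x | t < g x} ∩ K) ≠ ⊤ :=
            (lt_of_le_of_lt (measure_mono inter_subset_right) hKcomp.measure_lt_top).ne
          have hfin2 : volume ({x | g x ≤ t} ∩ K) ≠ ⊤ :=
            (lt_of_le_of_lt (measure_mono inter_subset_right) hKcomp.measure_lt_top).ne
          rw [ENNReal.le_ofReal_iff_toReal_le hfin1 (by nlinarith [pow_le_one₀ hr0.le hr1 (n := d), pow_nonneg hr0.le d])]
          have e1 : (volume ({x | t < g x} ∩ K)).toReal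
              + (volume ({x | g x ≤ t} ∩ K)).toReal = V := by
            rw [← ENNReal.toReal_add hfin1 hfin2, hsplit]
          have e2 : r ^ d * V ≤ (volume ({x | g x ≤ t} ∩ K)).toReal := by
            have := ENNReal.toReal_mono hfin2 hBle
            rwa [ENNReal.toReal_mul, ENNReal.toReal_ofReal (by positivity)] at this
          nlinarith
        · -- t > M : tail is empty
          have : {x | t < g x} ∩ K = ∅ := by
            ext x
            simp only [mem_inter_iff, mem_setOf_eq, mem_empty_iff_false, iff_false, not_and]
            intro hgt hx
            exact absurd (hg_le x hx) (not_le.2 (lt_trans htM hgt))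
          rw [this, measure_empty]
          exact zero_le
      have hBEmeas : Measurable BE := by
        apply Measurable.indicator _ measurableSet_Ioc
        exact (measurable_const.mul ((measurable_id.div_const M).pow_const d |>.const_sub 1)).ennreal_ofReal
      have step1 : ∫⁻ t in Ioi (0:ℝ), (volume.restrict K) {x | t < g x}
          ≤ ∫⁻ t in Ioi (0:ℝ), BE t :=
        setLIntegral_mono hBEmeas tail_bound
      have step2 : ∫⁻ t in Ioi (0:ℝ), BE t
          = ∫⁻ t in Ioc (0:ℝ) M, ENNReal.ofReal (V * (1 - (t/M)^d)) := by
        rw [hBEdef, lintegral_indicator measurableSet_Ioc, Measure.restrict_restrict measurableSet_Ioc]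
        congr 1
        rw [inter_eq_left.2 (Ioc_subset_Ioi_self)]
      have hbnn : 0 ≤ᵐ[volume.restrict (Ioc (0:ℝ) M)] fun t : ℝ => V * (1 - (t/M)^d) := by
        refine (ae_restrict_iff' measurableSet_Ioc).2 (Filter.Eventually.of_forall ?_)
        intro t ht
        have h1 : (t/M)^d ≤ 1 :=
          pow_le_one₀ (div_nonneg ht.1.le hM.le) ((div_le_one hM).2 ht.2)
        show (0:ℝ) ≤ V * (1 - (t/M)^d)
        nlinarith
      have hbcont : Continuous fun t : ℝ => V * (1 - (t/M)^d) :=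
        continuous_const.mul (continuous_const.sub ((continuous_id.div_const M).pow d))
      have hbint : IntegrableOn (fun t : ℝ => V * (1 - (t/M)^d)) (Ioc 0 M) volume :=
        hbcont.integrableOn_Ioc
      have step3 : ∫⁻ t in Ioc (0:ℝ) M, ENNReal.ofReal (V * (1 - (t/M)^d))
          = ENNReal.ofReal (∫ t in Ioc (0:ℝ) M, V * (1 - (t/M)^d)) :=
        (ofReal_integral_eq_lintegral_ofReal hbint hbnn).symm
      have step4 : ∫ t in Ioc (0:ℝ) M, V * (1 - (t/M)^d) = V * (M * d / (d + 1)) := by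
        rw [← intervalIntegral.integral_of_le hM.le]
        have hsub : ∀ t : ℝ, V * (1 - (t/M)^d) = V - (V / M^d) * t^d := by
          intro t
          ring
        simp only [hsub]
        rw [intervalIntegral.integral_sub (g := fun x : ℝ => V / M^d * x^d) intervalIntegrable_const
          (((continuous_const.mul (continuous_pow d)).intervalIntegrable 0 M)),
          intervalIntegral.integral_const_mul, integral_pow, intervalIntegral.integral_const]
        have hMd : (M:ℝ)^d ≠ 0 := by positivity
        have hd1 : (d:ℝ) + 1 ≠ 0 := by positivity
        field_simp
        ring
      -- put it together
      have gmeas : AEStronglyMeasurable g (volume.restrict K) :=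
        hgcont.aestronglyMeasurable
      rw [integral_eq_lintegral_of_nonneg_ae g_nn_ae gmeas]
      calc (∫⁻ x, ENNReal.ofReal (g x) ∂(volume.restrict K)).toReal
          ≤ (ENNReal.ofReal (V * (M * d / (d + 1)))).toReal := by
            apply ENNReal.toReal_mono ENNReal.ofReal_ne_top
            rw [layer]
            calc ∫⁻ t in Ioi (0:ℝ), (volume.restrict K) {x | t < g x}
                ≤ ∫⁻ t in Ioi (0:ℝ), BE t := step1
              _ = ENNReal.ofReal (V * (M * d / (d + 1))) := by rw [step2, step3, step4]
        _ = V * (M * d / (d + 1)) := ENNReal.toReal_ofReal (by positivity)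
  -- conclude from the main estimate
  have hconstint : IntegrableOn (fun _ : EuclideanSpace ℝ (Fin d) => m) K volume :=
    integrableOn_const hKcomp.measure_lt_top.ne
  have hsum : ∫ x in K, f x = (∫ x in K, g x) + V * m := by
    have : (fun x => f x) = fun x => g x + m := by
      funext x; simp [hgdef]
    rw [this, integral_add hIntg hconstint, setIntegral_const, smul_eq_mul]
    rfl
  have hfμ : f ((volume K).toReal⁻¹ • ∫ x in K, x) = V⁻¹ * ∫ x in K, f x := by
    rw [_root_.map_smul, smul_eq_mul]
    congr 1
    exact (ContinuousLinearMap.integral_comp_comm f hIntId).symm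
  have hle : f ((volume K).toReal⁻¹ • ∫ x in K, x) ≤ M * d / (d + 1) + m := by
    rw [hfμ, hsum]
    have h2 : V⁻¹ * ((∫ x in K, g x) + V * m) ≤ V⁻¹ * (V * (M * d / (d + 1)) + V * m) := by
      apply mul_le_mul_of_nonneg_left _ (by positivity)
      linarith
    calc V⁻¹ * ((∫ x in K, g x) + V * m) ≤ V⁻¹ * (V * (M * d / (d + 1)) + V * m) := h2
      _ = M * d / (d + 1) + m := by field_simp
  have hfb : f b = M + m := by rw [hMdef]; ring
  have hd1 : (d:ℝ) + 1 ≠ 0 := by positivity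
  have key : ((d:ℝ) + 1) * (M * d / (d + 1)) = M * d := by field_simp
  have hdm : (0:ℝ) ≤ d := Nat.cast_nonneg d
  rw [hfb]
  nlinarith [hle, mul_le_mul_of_nonneg_left hle (show (0:ℝ) ≤ (d:ℝ)+1 by positivity)]

lemma centroid_mem {d : ℕ} (hd : 0 < d) (K : Set (EuclideanSpace ℝ (Fin d)))
    (hKcomp : IsCompact K) (hKconv : Convex ℝ K) (hKint : (interior K).Nonempty) :
    (volume K).toReal⁻¹ • ∫ x in K, x ∈ K := by
  by_contra hco
  obtain ⟨f, u, hfu, huf⟩ := geometric_hahn_banach_closed_point hKconv hKcomp.isClosed hco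
  have hKne : K.Nonempty := hKint.mono interior_subset
  obtain ⟨b, hb, hbmax⟩ := hKcomp.exists_isMaxOn hKne f.continuous.continuousOn
  obtain ⟨a, ha, hamin⟩ := hKcomp.exists_isMinOn hKne f.continuous.continuousOn
  have key := centroid_avg_le hd K hKcomp hKconv hKint f a b ha hb
    (fun y hy => hamin hy) (fun y hy => hbmax hy)
  have h1 : f a ≤ f b := hamin hb
  have h2 : f b < u := hfu b hb
  have hd' : (1:ℝ) ≤ (d:ℝ) := by exact_mod_cast hd
  nlinarith [huf]

lemma reflect_mem {d : ℕ} (hd : 0 < d) (K : Set (EuclideanSpace ℝ (Fin d)))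
    (hKcomp : IsCompact K) (hKconv : Convex ℝ K) (hKint : (interior K).Nonempty)
    (μ : EuclideanSpace ℝ (Fin d))
    (hμ : μ = (volume K).toReal⁻¹ • ∫ x in K, x)
    (x : EuclideanSpace ℝ (Fin d)) (hx : x ∈ K) :
    μ + (d:ℝ)⁻¹ • (μ - x) ∈ K := by
  by_contra hco
  obtain ⟨f, u, hfu, huf⟩ := geometric_hahn_banach_closed_point hKconv hKcomp.isClosed hco
  have hKne : K.Nonempty := hKint.mono interior_subset
  obtain ⟨b, hb, hbmax⟩ := hKcomp.exists_isMaxOn hKne f.continuous.continuousOn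
  obtain ⟨a, ha, hamin⟩ := hKcomp.exists_isMinOn hKne f.continuous.continuousOn
  have key := centroid_avg_le hd K hKcomp hKconv hKint f a b ha hb
    (fun y hy => hamin hy) (fun y hy => hbmax hy)
  rw [← hμ] at key
  have hval : f (μ + (d:ℝ)⁻¹ • (μ - x)) = f μ + (d:ℝ)⁻¹ * (f μ - f x) := by
    rw [map_add, _root_.map_smul, map_sub, smul_eq_mul]
  have h1 : f a ≤ f x := hamin hx
  have h2 : f b < u := hfu b hb
  have hd' : (1:ℝ) ≤ (d:ℝ) := by exact_mod_cast hd
  have hdpos : (0:ℝ) < (d:ℝ) := by positivity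
  have hle : f (μ + (d:ℝ)⁻¹ • (μ - x)) ≤ f b := by
    have hh : f μ + (↑d)⁻¹ * (f μ - f x) = (((d:ℝ) + 1) * f μ - f x) / d := by
      field_simp
      ring
    rw [hval, hh, div_le_iff₀ hdpos]
    linarith
  linarith [huf]

/-- **Width after a centroid cut.** If `K ⊆ ℝ^d` is a compact convex body with nonempty
interior and centroid `μ`, and `H` is a half-space whose boundary hyperplane passes
through `μ`, then `δ(H ∩ K) ≥ δ(K)/(2d)`. -/
theorem width_after_centroid_cut {d : ℕ} (K : Set (EuclideanSpace ℝ (Fin d)))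
    (hKcomp : IsCompact K) (hKconv : Convex ℝ K) (hKint : (interior K).Nonempty)
    (μ : EuclideanSpace ℝ (Fin d))
    (hμ : μ = (volume K).toReal⁻¹ • ∫ x in K, x)
    (v : EuclideanSpace ℝ (Fin d)) (hv : v ≠ 0)
    (H : Set (EuclideanSpace ℝ (Fin d)))
    (hH : H = {x : EuclideanSpace ℝ (Fin d) | ⟪v, x - μ⟫ ≤ 0}) :
    minWidth K / (2 * d) ≤ minWidth (H ∩ K) := by
  have hd : 0 < d := by
    rcases Nat.eq_zero_or_pos d with h | h
    · subst h
      exact absurd (Subsingleton.elim v 0) hv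
    · exact h
  have hd' : (1:ℝ) ≤ (d:ℝ) := by exact_mod_cast hd
  have hμK : μ ∈ K := by rw [hμ]; exact centroid_mem hd K hKcomp hKconv hKint
  have hμH : μ ∈ H := by rw [hH]; simp
  set L := H ∩ K with hLdef
  have hLsub : L ⊆ K := Set.inter_subset_right
  have hμL : μ ∈ L := ⟨hμH, hμK⟩
  obtain ⟨R, hR⟩ := hKcomp.isBounded.subset_closedBall 0
  have hnorm : ∀ x ∈ K, ‖x‖ ≤ R := fun x hx => by
    simpa using hR hx
  have bddA : ∀ S : Set (EuclideanSpace ℝ (Fin d)), S ⊆ K →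
      ∀ u : EuclideanSpace ℝ (Fin d), ‖u‖ = 1 →
      BddAbove {r : ℝ | ∃ x ∈ S, ∃ y ∈ S, r = ⟪u, x - y⟫} := by
    intro S hS u hu
    refine ⟨2 * R, ?_⟩
    rintro r ⟨x, hx, y, hy, rfl⟩
    calc ⟪u, x - y⟫ ≤ ‖u‖ * ‖x - y‖ := real_inner_le_norm _ _
      _ ≤ 1 * (‖x‖ + ‖y‖) := by
          rw [hu]
          exact mul_le_mul_of_nonneg_left (norm_sub_le _ _) zero_le_one
      _ ≤ 2 * R := by
          have := hnorm x (hS hx)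
          have := hnorm y (hS hy)
          linarith
  have dirnn : ∀ S : Set (EuclideanSpace ℝ (Fin d)), S ⊆ K → S.Nonempty →
      ∀ u : EuclideanSpace ℝ (Fin d), ‖u‖ = 1 → 0 ≤ dirWidth S u := by
    rintro S hS ⟨p, hp⟩ u hu
    exact le_csSup (bddA S hS u hu) ⟨p, hp, p, hp, by simp⟩
  have main : ∀ u : EuclideanSpace ℝ (Fin d), ‖u‖ = 1 →
      minWidth K / (2 * d) ≤ dirWidth L u := by
    intro u hu
    have hKK : IsCompact (K ×ˢ K) := hKcomp.prod hKcomp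
    have hKne : K.Nonempty := hKint.mono interior_subset
    have hne : (K ×ˢ K).Nonempty := hKne.prod hKne
    have hcont : ContinuousOn
        (fun p : EuclideanSpace ℝ (Fin d) × EuclideanSpace ℝ (Fin d) => ⟪u, p.1 - p.2⟫)
        (K ×ˢ K) :=
      (Continuous.inner continuous_const (continuous_fst.sub continuous_snd)).continuousOn
    obtain ⟨⟨x, y⟩, hxy, hmax⟩ := hKK.exists_isMaxOn hne hcont
    have hxK : x ∈ K := hxy.1
    have hyK : y ∈ K := hxy.2
    set w := ⟪u, x - y⟫ with hwdef
    have hwmax : ∀ p ∈ K, ∀ q ∈ K, ⟪u, p - q⟫ ≤ w := fun p hp q hq =>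
      hmax (Set.mk_mem_prod hp hq)
    have hw0 : 0 ≤ w := by
      have := hwmax x hxK x hxK
      simpa using this
    have hdirK : dirWidth K u = w := by
      apply IsGreatest.csSup_eq
      exact ⟨⟨x, hxK, y, hyK, rfl⟩, by rintro r ⟨p, hp, q, hq, rfl⟩; exact hwmax p hp q hq⟩
    have hwK : minWidth K ≤ w := by
      rw [← hdirK]
      refine csInf_le ⟨0, ?_⟩ ⟨u, hu, rfl⟩
      rintro r ⟨u', hu', rfl⟩
      exact dirnn K Set.Subset.rfl hKne u' hu'
    have iswap : ∀ a z z' : EuclideanSpace ℝ (Fin d), ⟪a, z - z'⟫ = -⟪a, z' - z⟫ := by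
      intro a z z'
      rw [show z - z' = -(z' - z) by abel, inner_neg_right]
    -- produce a large element of the width set of L
    have branch : ∀ p ∈ K, ∀ c : ℝ, (c = 1 ∨ c = -1) → w / 2 ≤ c * ⟪u, p - μ⟫ →
        ∃ r ∈ {r : ℝ | ∃ x' ∈ L, ∃ y' ∈ L, r = ⟪u, x' - y'⟫}, w / (2 * d) ≤ r := by
      intro p hp c hc hcp
      rcases le_or_gt ⟪v, p - μ⟫ 0 with hpv | hpv
      · have hpL : p ∈ L := ⟨by rw [hH]; exact hpv, hp⟩
        refine ⟨c * ⟪u, p - μ⟫, ?_, ?_⟩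
        · rcases hc with rfl | rfl
          · exact ⟨p, hpL, μ, hμL, by ring⟩
          · exact ⟨μ, hμL, p, hpL, by rw [iswap u μ p]; ring⟩
        · have hstep : w / (2 * d) ≤ w / 2 := by
            rw [div_le_div_iff₀ (by positivity) (by positivity)]
            nlinarith
          linarith
      · set p' := μ + (d:ℝ)⁻¹ • (μ - p) with hp'def
        have hp'K : p' ∈ K := reflect_mem hd K hKcomp hKconv hKint μ hμ p hp
        have hp'H : p' ∈ H := by
          rw [hH]
          show ⟪v, p' - μ⟫ ≤ 0
          have : p' - μ = (d:ℝ)⁻¹ • (μ - p) := by rw [hp'def]; abel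
          rw [this, real_inner_smul_right]
          rw [iswap v μ p]
          have : (0:ℝ) < (d:ℝ)⁻¹ := by positivity
          nlinarith
        have hp'L : p' ∈ L := ⟨hp'H, hp'K⟩
        have hval : ⟪u, μ - p'⟫ = (d:ℝ)⁻¹ * ⟪u, p - μ⟫ := by
          have : μ - p' = (d:ℝ)⁻¹ • (p - μ) := by
            rw [hp'def, smul_sub, smul_sub]
            abel
          rw [this, real_inner_smul_right]
        refine ⟨c * ((d:ℝ)⁻¹ * ⟪u, p - μ⟫), ?_, ?_⟩
        · rcases hc with rfl | rfl
          · exact ⟨μ, hμL, p', hp'L, by rw [hval]; ring⟩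
          · exact ⟨p', hp'L, μ, hμL, by rw [iswap u p' μ, hval]; ring⟩
        · have hr : c * ((d:ℝ)⁻¹ * ⟪u, p - μ⟫) = (d:ℝ)⁻¹ * (c * ⟪u, p - μ⟫) := by ring
          rw [hr]
          have hi : (0:ℝ) < (d:ℝ)⁻¹ := by positivity
          have e1 : w / (2 * d) = (d:ℝ)⁻¹ * (w / 2) := by
            rw [inv_mul_eq_div, ← div_div]
          have e2 : (d:ℝ)⁻¹ * (w / 2) ≤ (d:ℝ)⁻¹ * (c * ⟪u, p - μ⟫) :=
            mul_le_mul_of_nonneg_left hcp hi.le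
          linarith
    have hsplit : ⟪u, x - μ⟫ + ⟪u, μ - y⟫ = w := by
      rw [hwdef, ← inner_add_right]
      congr 1
      abel
    have hcase : w / 2 ≤ ⟪u, x - μ⟫ ∨ w / 2 ≤ ⟪u, μ - y⟫ := by
      by_contra hcon
      push_neg at hcon
      linarith [hcon.1, hcon.2]
    have hex : ∃ r ∈ {r : ℝ | ∃ x' ∈ L, ∃ y' ∈ L, r = ⟪u, x' - y'⟫}, w / (2 * d) ≤ r := by
      rcases hcase with h | h
      · exact branch x hxK 1 (Or.inl rfl) (by rw [one_mul]; exact h)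
      · refine branch y hyK (-1) (Or.inr rfl) ?_
        rw [show (-1:ℝ) * ⟪u, y - μ⟫ = ⟪u, μ - y⟫ by rw [iswap u y μ]; ring]
        exact h
    obtain ⟨r, hrmem, hrge⟩ := hex
    have hLw : w / (2 * d) ≤ dirWidth L u :=
      le_trans hrge (le_csSup (bddA L hLsub u hu) hrmem)
    have h2d : (0:ℝ) < 2 * d := by positivity
    have hstep2 : minWidth K / (2 * d) ≤ w / (2 * d) := by
      rw [div_le_div_iff₀ h2d h2d]
      nlinarith
    linarith
  -- conclude
  have hu0 : ‖(‖v‖⁻¹ • v : EuclideanSpace ℝ (Fin d))‖ = 1 := by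
    rw [norm_smul, norm_inv, norm_norm]
    field_simp [norm_ne_zero_iff.2 hv]
  refine le_csInf ⟨dirWidth L (‖v‖⁻¹ • v), ⟨‖v‖⁻¹ • v, hu0, rfl⟩⟩ ?_
  rintro r ⟨u, hu, rfl⟩
  exact main u hu
end

section
/- Norm sandwich via John's theorem: For any norm ‖·‖ on ℝ^d (d ≥ 1), there exists an invertible linear map T : ℝ^d → ℝ^d such that for all x ∈ ℝ^d, ‖x‖₂ ≤ ‖T x‖ ≤ √d · ‖x‖₂, where ‖·‖₂ is the Euclidean norm. -/
open Real Finset RealInnerProductSpace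

/-- Choice of stretch parameters for John's argument. -/
lemma john_scalar (d : ℕ) (hd1 : 1 ≤ d) (r : ℝ) (hr : 1 < r) (hd : (d : ℝ) < r^2) :
    ∃ α β : ℝ, 1 ≤ α ∧ 0 < β ∧ β ≤ 1 ∧ α^2 < r^2 ∧ β^2 * (r^2-1) = r^2 - α^2 ∧
      1 < α * β^(d-1) := by
  have hr1 : (0:ℝ) < r^2 - 1 := by nlinarith
  have hd1' : (1:ℝ) ≤ d := by exact_mod_cast hd1
  set c : ℝ := ((d:ℝ)-1)/(r^2-1) with hc_def
  have hc0 : 0 ≤ c := div_nonneg (by linarith) hr1.le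
  set δ : ℝ := 1 - c with hδ_def
  have hδ : 0 < δ := by
    have : c < 1 := (div_lt_one hr1).2 (by linarith)
    simp [hδ_def]; linarith
  set ε : ℝ := min (δ/(c+1)) ((r^2-1)/2) with hε_def
  have hε : 0 < ε := lt_min (div_pos hδ (by linarith)) (by linarith)
  have hε1 : ε ≤ (r^2-1)/2 := min_le_right _ _
  have hε2 : c * ε ≤ c/(c+1) * δ := by
    have h := min_le_left (δ/(c+1)) ((r^2-1)/2)
    calc c * ε ≤ c * (δ/(c+1)) := by
          exact mul_le_mul_of_nonneg_left (hε_def ▸ h) hc0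
      _ = c/(c+1) * δ := by ring
  have hcε : c * ε < δ := by
    rcases eq_or_lt_of_le hc0 with h | h
    · rw [← h]; simpa using hδ
    · have : c/(c+1) < 1 := (div_lt_one (by linarith)).2 (by linarith)
      calc c * ε ≤ c/(c+1) * δ := hε2
        _ < 1 * δ := by exact mul_lt_mul_of_pos_right this hδ
        _ = δ := one_mul δ
  refine ⟨Real.sqrt (1+ε), Real.sqrt ((r^2-1-ε)/(r^2-1)), ?_, ?_, ?_, ?_, ?_, ?_⟩
  case _ => exact Real.one_le_sqrt.2 (by linarith)
  case _ => exact Real.sqrt_pos.2 (div_pos (by linarith) hr1)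
  case _ => exact Real.sqrt_le_one.2 ((div_le_one hr1).2 (by linarith))
  case _ =>
    rw [Real.sq_sqrt (by linarith : (0:ℝ) ≤ 1+ε)]
    nlinarith
  case _ =>
    rw [Real.sq_sqrt (div_nonneg (by linarith) hr1.le),
        Real.sq_sqrt (by linarith : (0:ℝ) ≤ 1+ε)]
    field_simp
    ring
  case _ =>
    have hα2 : (Real.sqrt (1+ε))^2 = 1+ε := Real.sq_sqrt (by linarith)
    have hβ2 : (Real.sqrt ((r^2-1-ε)/(r^2-1)))^2 = (r^2-1-ε)/(r^2-1) :=
      Real.sq_sqrt (div_nonneg (by linarith) hr1.le)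
    have hβpos : 0 < Real.sqrt ((r^2-1-ε)/(r^2-1)) :=
      Real.sqrt_pos.2 (div_pos (by linarith) hr1)
    have hαpos : 0 < Real.sqrt (1+ε) := Real.sqrt_pos.2 (by linarith)
    have key : 1 < (Real.sqrt (1+ε) * (Real.sqrt ((r^2-1-ε)/(r^2-1)))^(d-1))^2 := by
      have expand : (Real.sqrt (1+ε) * (Real.sqrt ((r^2-1-ε)/(r^2-1)))^(d-1))^2
          = (1+ε) * ((r^2-1-ε)/(r^2-1))^(d-1) := by
        rw [mul_pow, hα2, ← pow_mul, mul_comm (d-1) 2, pow_mul, hβ2]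
      rw [expand]
      have bern : 1 - c*ε ≤ ((r^2-1-ε)/(r^2-1))^(d-1) := by
        have hx : (-2:ℝ) ≤ -(ε/(r^2-1)) := by
          have h : ε/(r^2-1) ≤ 2 := by rw [div_le_iff₀ hr1]; nlinarith
          linarith
        have hb := one_add_mul_le_pow hx (d-1)
        have hcast : ((d-1:ℕ):ℝ) = (d:ℝ)-1 := by
          rw [Nat.cast_sub hd1]; norm_num
        have heq : (r^2-1-ε)/(r^2-1) = 1 + (-(ε/(r^2-1))) := by field_simp; ring
        have heq2 : 1 + ((d-1:ℕ):ℝ) * (-(ε/(r^2-1))) = 1 - c*ε := by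
          rw [hcast, hc_def]; field_simp; ring
        rw [heq]; rw [heq2] at hb; exact hb
      have h1cε : 0 < 1 - c*ε := by linarith [hcε, hδ]; 
      calc (1:ℝ) < (1+ε) * (1-c*ε) := by nlinarith
        _ ≤ (1+ε) * ((r^2-1-ε)/(r^2-1))^(d-1) :=
          mul_le_mul_of_nonneg_left bern (by linarith)
    nlinarith [key, mul_pos hαpos (pow_pos hβpos (d-1))]

/-- Choice of the convex-combination coefficient in John's argument. -/
lemma john_lambda (r α β T W : ℝ) (hr : 1 < r) (hα : 1 ≤ α) (hαr : α^2 < r^2)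
    (hβ : 0 < β) (hβr : β^2*(r^2-1) = r^2 - α^2) (hT : 0 ≤ T) (hW : 0 ≤ W)
    (hcon : β^2*T^2 + α^2*W^2 ≤ α^2*β^2) :
    ∃ l : ℝ, 0 ≤ l ∧ l < 1 ∧ (T - l*r)^2 + W^2 ≤ (1-l)^2 := by
  have hr1 : (0:ℝ) < r^2 - 1 := by nlinarith
  have hα0 : (0:ℝ) < α := by linarith
  have hT2 : T^2 ≤ α^2 := by nlinarith [mul_pos hβ hβ, sq_nonneg W, mul_pos (mul_pos hα0 hα0) (mul_pos hβ hβ)]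
  have hTα : T ≤ α := by nlinarith [hT2, mul_self_nonneg (T + α)]
  have hTr : T < r := by nlinarith
  rcases le_or_gt (r*T) 1 with h | h
  · refine ⟨0, le_refl 0, by norm_num, ?_⟩
    simp only [zero_mul, sub_zero]
    -- need T^2 + W^2 ≤ 1; reduces to (α²-1)(α² - r²T²) ≥ 0
    have hrT : 0 ≤ r*T := mul_nonneg (by linarith) hT
    have h1 : r^2*T^2 ≤ 1 := by nlinarith [hrT, h]
    nlinarith [mul_nonneg (by nlinarith : (0:ℝ) ≤ α^2 - 1)
        (by nlinarith : (0:ℝ) ≤ α^2 - r^2*T^2), sq_nonneg T, sq_nonneg W,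
      mul_pos hα0 hα0, mul_pos (mul_pos hα0 hα0) hr1]
  · refine ⟨(r*T-1)/(r^2-1), div_nonneg (by linarith) hr1.le, ?_, ?_⟩
    · rw [div_lt_one hr1]; nlinarith
    · have key : W^2 * (r^2-1) ≤ (r-T)^2 := by
        nlinarith [sq_nonneg (r*T - α^2), mul_pos hα0 hα0, sq_nonneg (r-T)]
      have e : (1-(r*T-1)/(r^2-1))^2 - (T - ((r*T-1)/(r^2-1))*r)^2
          = (r-T)^2/(r^2-1) := by
        field_simp
        ring
      have : W^2 ≤ (r-T)^2/(r^2-1) := by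
        rw [le_div_iff₀ hr1]; exact key
      linarith [e, this]

set_option maxHeartbeats 1000000 in


/-- **Norm sandwich via John's theorem.** For any norm `N` on `ℝ^d` (`d ≥ 1`), there is an
invertible linear map `T : ℝ^d → ℝ^d` such that `‖x‖₂ ≤ N(T x) ≤ √d · ‖x‖₂` for all `x`,
where `‖·‖₂` is the Euclidean norm. -/
theorem norm_sandwich_john {d : ℕ} (hd : 1 ≤ d)
    (N : EuclideanSpace ℝ (Fin d) → ℝ)
    (Nadd : ∀ x y, N (x + y) ≤ N x + N y)
    (Nsmul : ∀ (c : ℝ) (x), N (c • x) = |c| * N x)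
    (Ndef : ∀ x, N x = 0 → x = 0) :
    ∃ T : EuclideanSpace ℝ (Fin d) ≃ₗ[ℝ] EuclideanSpace ℝ (Fin d),
      ∀ x : EuclideanSpace ℝ (Fin d), ‖x‖ ≤ N (T x) ∧ N (T x) ≤ Real.sqrt d * ‖x‖ := by
  classical
  have N0 : N 0 = 0 := by simpa using Nsmul 0 0
  have Nnonneg : ∀ x, 0 ≤ N x := by
    intro x
    have h1 := Nadd x ((-1 : ℝ) • x)
    rw [Nsmul] at h1
    simp [N0] at h1
    linarith
  have Npos : ∀ x, x ≠ 0 → 0 < N x := fun x hx =>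
    lt_of_le_of_ne (Nnonneg x) (fun h => hx (Ndef x h.symm))
  have hfinrank : Module.finrank ℝ (EuclideanSpace ℝ (Fin d)) = d := finrank_euclideanSpace_fin
  haveI : Nontrivial (EuclideanSpace ℝ (Fin d)) := by
    exact Module.nontrivial_of_finrank_pos (R := ℝ) (by rw [hfinrank]; exact hd)
  -- upper bound constant
  obtain ⟨C, hC0, hCub⟩ : ∃ C : ℝ, 0 < C ∧ ∀ x, N x ≤ C * ‖x‖ := by
    set b := EuclideanSpace.basisFun (Fin d) ℝ with hb_def
    have hbnn : ∀ i, 0 ≤ N (b i) := fun i => Nnonneg _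
    have hsnn : 0 ≤ ∑ i, N (b i) := Finset.sum_nonneg fun i _ => hbnn i
    refine ⟨(∑ i, N (b i)) + 1, by linarith, fun x => ?_⟩
    have hsum : ∀ (s : Finset (Fin d)) (f : Fin d → EuclideanSpace ℝ (Fin d)),
        N (∑ i ∈ s, f i) ≤ ∑ i ∈ s, N (f i) := by
      intro s f
      induction s using Finset.induction with
      | empty => simp [N0]
      | insert a s' hnot ih =>
        rw [Finset.sum_insert hnot, Finset.sum_insert hnot]
        exact le_trans (Nadd _ _) (by linarith)
    have hx : x = ∑ i, b.repr x i • b i := (b.sum_repr x).symm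
    have hcoord : ∀ i, |b.repr x i| ≤ ‖x‖ := by
      intro i
      rw [b.repr_apply_apply]
      calc |⟪b i, x⟫| ≤ ‖b i‖ * ‖x‖ := abs_real_inner_le_norm _ _
        _ = ‖x‖ := by rw [b.orthonormal.1 i, one_mul]
    calc N x = N (∑ i, b.repr x i • b i) := by rw [← hx]
      _ ≤ ∑ i, N (b.repr x i • b i) := hsum _ _
      _ = ∑ i, |b.repr x i| * N (b i) := by simp only [Nsmul]
      _ ≤ ∑ i, ‖x‖ * N (b i) := Finset.sum_le_sum fun i _ =>
          mul_le_mul_of_nonneg_right (hcoord i) (hbnn i)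
      _ = (∑ i, N (b i)) * ‖x‖ := by rw [← Finset.mul_sum, mul_comm]
      _ ≤ ((∑ i, N (b i)) + 1) * ‖x‖ := by
          have := norm_nonneg x; nlinarith
  -- continuity of N
  have Ncont : Continuous N := by
    have hlip : LipschitzWith (Real.toNNReal C) N := by
      apply LipschitzWith.of_dist_le_mul
      intro x y
      rw [Real.dist_eq, dist_eq_norm, Real.coe_toNNReal C hC0.le]
      have h1 := Nadd (x - y) y
      have h2 := Nadd (y - x) x
      simp only [sub_add_cancel] at h1 h2
      have h3 : N (y - x) = N (x - y) := by
        have he : y - x = (-1 : ℝ) • (x - y) := by module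
        rw [he, Nsmul]; simp
      have h4 : N (x - y) ≤ C * ‖x - y‖ := hCub _
      rw [abs_sub_le_iff]
      constructor
      · linarith
      · rw [h3] at h2; linarith
    exact hlip.continuous
  -- lower bound constant
  obtain ⟨c, hc0, hclb⟩ : ∃ c : ℝ, 0 < c ∧ ∀ x, c * ‖x‖ ≤ N x := by
    obtain ⟨x₀, hx₀s, hx₀min⟩ := (isCompact_sphere (0 : EuclideanSpace ℝ (Fin d)) 1).exists_isMinOn
      (NormedSpace.sphere_nonempty.2 zero_le_one) Ncont.continuousOn
    have hx₀norm : ‖x₀‖ = 1 := by simpa using mem_sphere_zero_iff_norm.1 hx₀s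
    have hx₀0 : x₀ ≠ 0 := by
      intro h; rw [h] at hx₀norm; simp at hx₀norm
    refine ⟨N x₀, Npos _ hx₀0, fun x => ?_⟩
    rcases eq_or_ne x 0 with rfl | hx
    · simp [N0]
    · have hxn : (0:ℝ) < ‖x‖ := norm_pos_iff.2 hx
      have hmem : ‖x‖⁻¹ • x ∈ Metric.sphere (0 : EuclideanSpace ℝ (Fin d)) 1 := by
        rw [mem_sphere_zero_iff_norm, norm_smul, Real.norm_eq_abs, abs_inv, abs_norm,
          inv_mul_cancel₀ hxn.ne']
      have hmin : N x₀ ≤ N (‖x‖⁻¹ • x) := hx₀min hmem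
      rw [Nsmul, abs_inv, abs_norm] at hmin
      calc N x₀ * ‖x‖ ≤ (‖x‖⁻¹ * N x) * ‖x‖ := by
            exact mul_le_mul_of_nonneg_right hmin hxn.le
        _ = N x := by field_simp
  -- the compact family of "contractions into the unit ball of N"
  set S : Set (EuclideanSpace ℝ (Fin d) →L[ℝ] EuclideanSpace ℝ (Fin d)) :=
    {f | ∀ x, N (f x) ≤ ‖x‖} with hS_def
  have hf0S : (C⁻¹ • ContinuousLinearMap.id ℝ (EuclideanSpace ℝ (Fin d))) ∈ S := by
    intro x
    simp only [ContinuousLinearMap.smul_apply, ContinuousLinearMap.id_apply]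
    rw [Nsmul, abs_of_pos (inv_pos.2 hC0)]
    calc C⁻¹ * N x ≤ C⁻¹ * (C * ‖x‖) :=
          mul_le_mul_of_nonneg_left (hCub x) (inv_pos.2 hC0).le
      _ = ‖x‖ := by field_simp
  obtain ⟨A, hAS, hAmax⟩ : ∃ A ∈ S, ∀ B ∈ S, |B.det| ≤ |A.det| := by
    have hclosed : IsClosed S := by
      have he : S = ⋂ x, {f : EuclideanSpace ℝ (Fin d) →L[ℝ] EuclideanSpace ℝ (Fin d) |
          N (f x) ≤ ‖x‖} := by
        ext f; simp [hS_def, Set.mem_iInter]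
      rw [he]
      refine isClosed_iInter fun x => isClosed_le ?_ continuous_const
      exact Ncont.comp (ContinuousLinearMap.apply ℝ (EuclideanSpace ℝ (Fin d)) x).continuous
    have hbdd : Bornology.IsBounded S := by
      apply (Metric.isBounded_closedBall (x := (0 : EuclideanSpace ℝ (Fin d) →L[ℝ]
        EuclideanSpace ℝ (Fin d))) (r := c⁻¹)).subset
      intro f hf
      rw [Metric.mem_closedBall, dist_zero_right]
      refine ContinuousLinearMap.opNorm_le_bound _ (inv_pos.2 hc0).le fun x => ?_
      have h1 : c * ‖f x‖ ≤ N (f x) := hclb _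
      have h2 : N (f x) ≤ ‖x‖ := hf x
      rw [inv_mul_eq_div, le_div_iff₀ hc0]
      linarith [mul_comm c ‖f x‖ ▸ h1]
    have hcpt : IsCompact S := Metric.isCompact_of_isClosed_isBounded hclosed hbdd
    obtain ⟨A, hAS, hAm⟩ := hcpt.exists_isMaxOn ⟨_, hf0S⟩
      ((ContinuousLinearMap.continuous_det.abs).continuousOn)
    exact ⟨A, hAS, fun B hB => hAm hB⟩
  have hdetA : A.det ≠ 0 := by
    have hdet0 : (C⁻¹ • ContinuousLinearMap.id ℝ (EuclideanSpace ℝ (Fin d))).det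
        = C⁻¹ ^ d := by
      change LinearMap.det _ = _
      rw [ContinuousLinearMap.coe_smul, ContinuousLinearMap.coe_id, LinearMap.det_smul,
        hfinrank, LinearMap.det_id, mul_one]
    have h1 := hAmax _ hf0S
    rw [hdet0] at h1
    have h2 : 0 < C⁻¹ ^ d := by positivity
    intro h
    rw [h] at h1
    simp only [abs_zero] at h1
    rw [abs_of_pos h2] at h1
    linarith
  have hdetA' : LinearMap.det (A : EuclideanSpace ℝ (Fin d) →ₗ[ℝ] EuclideanSpace ℝ (Fin d)) ≠ 0 :=
    hdetA
  set Aeq : EuclideanSpace ℝ (Fin d) ≃ₗ[ℝ] EuclideanSpace ℝ (Fin d) :=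
    LinearMap.equivOfDetNeZero (A : EuclideanSpace ℝ (Fin d) →ₗ[ℝ] EuclideanSpace ℝ (Fin d))
      hdetA' with hAeq
  have hAeq_apply : ∀ x, Aeq x = A x := fun x => by
    rw [hAeq]; rfl
  -- the key claim coming from maximality of |det A|
  have key : ∀ z : EuclideanSpace ℝ (Fin d), ‖z‖ ≤ Real.sqrt d * N (A z) := by
    by_contra hcontra
    push_neg at hcontra
    obtain ⟨z, hz⟩ := hcontra
    have hz0 : z ≠ 0 := by
      rintro rfl
      rw [map_zero, N0, norm_zero, mul_zero] at hz
      exact lt_irrefl 0 hz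
    have hAz0 : A z ≠ 0 := by
      intro h
      apply hz0
      have : Aeq z = Aeq 0 := by rw [hAeq_apply, h, map_zero]
      exact Aeq.injective this
    have hNAz : 0 < N (A z) := Npos _ hAz0
    obtain ⟨r, hr_def⟩ : ∃ r : ℝ, r = ‖z‖ / N (A z) := ⟨_, rfl⟩
    have hrd : Real.sqrt d < r := by
      rw [hr_def, lt_div_iff₀ hNAz]; linarith [hz]
    have hsd1 : (1:ℝ) ≤ Real.sqrt d := Real.one_le_sqrt.2 (by exact_mod_cast hd)
    have hr1 : (1:ℝ) < r := lt_of_le_of_lt hsd1 hrd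
    have hdr2 : (d:ℝ) < r^2 := by
      nlinarith [Real.sq_sqrt (show (0:ℝ) ≤ d by positivity), hrd, hsd1]
    obtain ⟨u, hu_def⟩ : ∃ u : EuclideanSpace ℝ (Fin d), u = ‖z‖⁻¹ • z := ⟨_, rfl⟩
    have hzn : (0:ℝ) < ‖z‖ := norm_pos_iff.2 hz0
    have hun : ‖u‖ = 1 := by
      rw [hu_def, norm_smul, Real.norm_eq_abs, abs_inv, abs_norm, inv_mul_cancel₀ hzn.ne']
    have hAru : N (A (r • u)) = 1 := by
      have he : r • u = (N (A z))⁻¹ • z := by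
        rw [hu_def, smul_smul, hr_def]
        congr 1
        field_simp
      rw [he, map_smul, Nsmul, abs_inv, abs_of_pos hNAz]
      field_simp
    obtain ⟨α, β, hα, hβ, hβ1, hαr, hβr, hgain⟩ := john_scalar d hd r hr1 hdr2
    -- an orthonormal basis whose first vector is u
    set i0 : Fin d := ⟨0, hd⟩ with hi0_def
    have horth : Orthonormal ℝ (Set.restrict {i0} (fun _ : Fin d => u)) := by
      rw [orthonormal_iff_ite]
      intro i j
      have hij : i = j := Subtype.ext (by
        have hi := i.2; have hj := j.2
        simp only [Set.mem_singleton_iff] at hi hj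
        rw [hi, hj])
      subst hij
      simp only [if_pos rfl, Set.restrict_apply]
      rw [real_inner_self_eq_norm_sq]; change ‖u‖ ^ 2 = _; rw [hun]; norm_num
    obtain ⟨b, hb⟩ := horth.exists_orthonormalBasis_extension_of_card_eq
      (by simp [hfinrank])
    have hbu : b i0 = u := hb i0 (Set.mem_singleton _)
    have huu : ⟪u, u⟫ = 1 := by
      rw [real_inner_self_eq_norm_sq, hun]; norm_num
    -- the stretching map D
    set Dm : EuclideanSpace ℝ (Fin d) →ₗ[ℝ] EuclideanSpace ℝ (Fin d) :=
      { toFun := fun x => β • x + ((α - β) * ⟪u, x⟫) • u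
        map_add' := fun x y => by
          simp only [inner_add_right]
          module
        map_smul' := fun m x => by
          simp only [real_inner_smul_right, RingHom.id_apply]
          module } with hDm_def
    have hDapply : ∀ x, Dm x = β • x + ((α - β) * ⟪u, x⟫) • u := fun x => rfl
    -- determinant of D
    have hinner_b : ∀ j, ⟪u, b j⟫ = if i0 = j then 1 else 0 := fun j => by
      rw [← hbu]
      exact orthonormal_iff_ite.1 b.orthonormal i0 j
    have hdetD : LinearMap.det Dm = α * β^(d-1) := by
      have hmat : LinearMap.toMatrix b.toBasis b.toBasis Dm
          = Matrix.diagonal (fun i => if i = i0 then α else β) := by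
        ext i j
        rw [LinearMap.toMatrix_apply, OrthonormalBasis.coe_toBasis]
        have h1 : Dm (b j) = β • b j + ((α - β) * (if i0 = j then 1 else 0)) • b i0 := by
          rw [hDapply, hinner_b, hbu]
        have hrepr : ∀ k l, b.toBasis.repr (b k) l = if l = k then (1:ℝ) else 0 := by
          intro k l
          rw [OrthonormalBasis.coe_toBasis_repr_apply, OrthonormalBasis.repr_self,
            EuclideanSpace.single_apply]
        rw [h1, map_add, map_smul, map_smul]
        simp only [Finsupp.add_apply, Finsupp.smul_apply, smul_eq_mul]
        rw [hrepr, hrepr, Matrix.diagonal_apply]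
        by_cases hij : i = j
        · subst hij
          by_cases hii0 : i = i0
          · subst hii0
            simp only [eq_self_iff_true, if_true]
            ring
          · have h2 : ¬ (i0 = i) := fun h => hii0 h.symm
            simp only [eq_self_iff_true, if_true, if_neg hii0, if_neg h2]
            ring
        · by_cases hjj : i0 = j
          · have h4 : ¬ (i = i0) := fun h => hij (h.trans hjj)
            simp only [if_neg hij, if_pos hjj, if_neg h4]
            ring
          · simp only [if_neg hij, if_neg hjj]
            ring
      have hrest : ∀ x ∈ Finset.univ \ {i0}, (if x = i0 then α else β) = β := fun x hx => by
        rw [Finset.mem_sdiff, Finset.mem_singleton] at hx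
        exact if_neg hx.2
      rw [← LinearMap.det_toMatrix b.toBasis, hmat, Matrix.det_diagonal,
        Finset.prod_eq_mul_prod_diff_singleton_of_mem (Finset.mem_univ i0), if_pos rfl,
        Finset.prod_congr rfl hrest, Finset.prod_const]
      congr 2
      rw [Finset.card_sdiff_of_subset (by simp), Finset.card_univ, Fintype.card_fin,
        Finset.card_singleton]
    -- A ∘ D is still a contraction into the unit ball of N
    have hDS : ∀ x, N (A (Dm x)) ≤ ‖x‖ := by
      have hone : ∀ x, ‖x‖ ≤ 1 → N (A (Dm x)) ≤ 1 := by
        intro x hx1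
        obtain ⟨t, ht_def⟩ : ∃ t : ℝ, t = ⟪u, x⟫ := ⟨_, rfl⟩
        obtain ⟨w, hw_def⟩ : ∃ w : EuclideanSpace ℝ (Fin d), w = x - t • u := ⟨_, rfl⟩
        have hworth : ⟪u, w⟫ = 0 := by
          rw [hw_def, inner_sub_right, real_inner_smul_right, huu, ← ht_def]; ring
        have hxdecomp : x = t • u + w := by rw [hw_def]; module
        have hnx : t^2 + ‖w‖^2 = ‖x‖^2 := by
          have h2 := norm_add_sq_real (t • u) w
          rw [← hxdecomp] at h2
          rw [h2, norm_smul, Real.norm_eq_abs, real_inner_smul_left, hworth]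
          rw [mul_pow, sq_abs, hun]
          ring
        have hcon2 : t^2 + ‖w‖^2 ≤ 1 := by
          rw [hnx]
          calc ‖x‖^2 ≤ 1^2 := pow_le_pow_left₀ (norm_nonneg x) hx1 2
            _ = 1 := one_pow 2
        have hα0 : (0:ℝ) < α := lt_of_lt_of_le one_pos hα
        have hconx : β^2*(α*|t|)^2 + α^2*(β*‖w‖)^2 ≤ α^2*β^2 := by
          nlinarith [sq_abs t, mul_pos (mul_pos hβ hβ) (mul_pos hα0 hα0), hcon2]
        obtain ⟨l, hl0, hl1, hlkey⟩ := john_lambda r α β (α * |t|) (β * ‖w‖) hr1 hα hαr hβ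
          hβr (by positivity) (by positivity) hconx
        obtain ⟨σ, hσ_def⟩ : ∃ σ : ℝ, σ = if 0 ≤ t then 1 else -1 := ⟨_, rfl⟩
        have hσ2 : σ^2 = 1 := by
          rw [hσ_def]; split_ifs <;> norm_num
        obtain ⟨q, hq_def⟩ : ∃ q : EuclideanSpace ℝ (Fin d), q = (σ * r) • u := ⟨_, rfl⟩
        have hNAq : N (A q) = 1 := by
          have h2 : q = σ • (r • u) := by rw [hq_def]; exact mul_smul _ _ _
          have h3 : |σ| = 1 := by rw [hσ_def]; split_ifs <;> norm_num
          rw [h2, map_smul, Nsmul, hAru, h3, mul_one]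
        have hl1' : (0:ℝ) < 1 - l := by linarith
        have hcoef : α*t - l*(σ*r) = σ*(α*|t| - l*r) := by
          rcases le_or_gt 0 t with h | h
          · rw [hσ_def, if_pos h, abs_of_nonneg h]; ring
          · rw [hσ_def, if_neg (not_le.2 h), abs_of_neg h]; ring
        have hDxq : Dm x - l • q = (α*t - l*(σ*r)) • u + β • w := by
          have h4 : Dm x = (α * t) • u + β • w := by
            rw [hDapply, ← ht_def, hxdecomp]
            module
          rw [h4, hq_def]
          module
        have hnormsq : ‖Dm x - l • q‖^2 = (α*|t| - l*r)^2 + (β*‖w‖)^2 := by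
          rw [hDxq, norm_add_sq_real, real_inner_smul_left, real_inner_smul_right, hworth,
            norm_smul, norm_smul, Real.norm_eq_abs, Real.norm_eq_abs, hun]
          have e1 : (|α * t - l * (σ * r)| * 1)^2 = (σ*(α*|t| - l*r))^2 := by
            rw [mul_one, sq_abs, hcoef]
          have e2 : (|β| * ‖w‖)^2 = (β*‖w‖)^2 := by
            rw [mul_pow, mul_pow, sq_abs]
          rw [e1, e2, mul_pow, hσ2, one_mul]
          ring
        have hbound : ‖Dm x - l • q‖ ≤ 1 - l := by
          have hsq : ‖Dm x - l • q‖^2 ≤ (1-l)^2 := by rw [hnormsq]; exact hlkey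
          calc ‖Dm x - l • q‖ = Real.sqrt (‖Dm x - l • q‖^2) :=
                (Real.sqrt_sq (norm_nonneg _)).symm
            _ ≤ Real.sqrt ((1-l)^2) := Real.sqrt_le_sqrt hsq
            _ = 1 - l := Real.sqrt_sq hl1'.le
        obtain ⟨p, hp_def⟩ : ∃ p : EuclideanSpace ℝ (Fin d),
          p = (1 - l)⁻¹ • (Dm x - l • q) := ⟨_, rfl⟩
        have hpnorm : ‖p‖ ≤ 1 := by
          rw [hp_def, norm_smul, Real.norm_eq_abs, abs_of_pos (inv_pos.2 hl1')]
          rw [inv_mul_le_iff₀ hl1', mul_one]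
          exact hbound
        have hdecomp : Dm x = l • q + (1 - l) • p := by
          rw [hp_def, smul_inv_smul₀ hl1'.ne']
          module
        calc N (A (Dm x)) = N (l • A q + (1-l) • A p) := by
              rw [hdecomp, map_add, map_smul, map_smul]
          _ ≤ N (l • A q) + N ((1-l) • A p) := Nadd _ _
          _ = l * N (A q) + (1-l) * N (A p) := by
              rw [Nsmul, Nsmul, abs_of_nonneg hl0, abs_of_nonneg hl1'.le]
          _ ≤ l * 1 + (1-l) * 1 := by
              have h6 : N (A p) ≤ ‖p‖ := hAS p
              have h7 : N (A p) ≤ 1 := le_trans h6 hpnorm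
              have h8 := hNAq.le
              exact add_le_add (mul_le_mul_of_nonneg_left h8 hl0)
                (mul_le_mul_of_nonneg_left h7 hl1'.le)
          _ = 1 := by ring
      intro x
      rcases eq_or_ne x 0 with rfl | hx0
      · simp [N0]
      · have hxn : (0:ℝ) < ‖x‖ := norm_pos_iff.2 hx0
        have h1 := hone (‖x‖⁻¹ • x)
          (by rw [norm_smul, Real.norm_eq_abs, abs_inv, abs_norm, inv_mul_cancel₀ hxn.ne'])
        rw [map_smul, map_smul, Nsmul, abs_inv, abs_norm] at h1
        calc N (A (Dm x)) = ‖x‖ * (‖x‖⁻¹ * N (A (Dm x))) := by field_simp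
          _ ≤ ‖x‖ * 1 := mul_le_mul_of_nonneg_left h1 hxn.le
          _ = ‖x‖ := mul_one _
    -- contradiction with maximality of |det A|
    set Dc : EuclideanSpace ℝ (Fin d) →L[ℝ] EuclideanSpace ℝ (Fin d) :=
      LinearMap.toContinuousLinearMap Dm with hDc_def
    have hDcS : A.comp Dc ∈ S := by
      intro x
      have he : (A.comp Dc) x = A (Dm x) := by
        rw [ContinuousLinearMap.comp_apply, hDc_def]
        rfl
      rw [he]
      exact hDS x
    have hdet_comp : (A.comp Dc).det = A.det * (α * β^(d-1)) := by
      have h1 : LinearMap.det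
          ((Dc : EuclideanSpace ℝ (Fin d) →L[ℝ] EuclideanSpace ℝ (Fin d)) :
            EuclideanSpace ℝ (Fin d) →ₗ[ℝ] EuclideanSpace ℝ (Fin d)) = α * β^(d-1) := by
        rw [hDc_def, LinearMap.coe_toContinuousLinearMap, hdetD]
      change LinearMap.det _ = _
      rw [show ((A.comp Dc : EuclideanSpace ℝ (Fin d) →L[ℝ] EuclideanSpace ℝ (Fin d)) :
          EuclideanSpace ℝ (Fin d) →ₗ[ℝ] EuclideanSpace ℝ (Fin d)) =
          (A : EuclideanSpace ℝ (Fin d) →ₗ[ℝ] EuclideanSpace ℝ (Fin d)).comp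
            (Dc : EuclideanSpace ℝ (Fin d) →ₗ[ℝ] EuclideanSpace ℝ (Fin d)) from rfl,
        LinearMap.det_comp, h1]
    have hle := hAmax _ hDcS
    rw [hdet_comp, abs_mul] at hle
    have hdetApos : 0 < |A.det| := abs_pos.2 hdetA
    have habs : |α * β^(d-1)| = α * β^(d-1) := abs_of_pos (by positivity)
    rw [habs] at hle
    have hfin := mul_lt_mul_of_pos_left hgain hdetApos
    rw [mul_one] at hfin
    linarith
  -- final assembly
  have hsd0 : (0:ℝ) ≤ Real.sqrt d := Real.sqrt_nonneg _
  have hsd : Real.sqrt d ≠ 0 := by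
    have : (0:ℝ) < Real.sqrt d := Real.sqrt_pos.2 (by exact_mod_cast hd)
    exact this.ne'
  refine ⟨Aeq.trans (LinearEquiv.smulOfNeZero ℝ (EuclideanSpace ℝ (Fin d)) (Real.sqrt d) hsd),
    fun x => ?_⟩
  have hTx : (Aeq.trans (LinearEquiv.smulOfNeZero ℝ (EuclideanSpace ℝ (Fin d))
      (Real.sqrt d) hsd)) x = Real.sqrt d • (A x) := by
    rw [LinearEquiv.trans_apply, hAeq_apply]
    rfl
  rw [hTx, Nsmul, abs_of_nonneg hsd0]
  refine ⟨key x, ?_⟩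
  exact mul_le_mul_of_nonneg_left (hAS x) hsd0
end
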